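/- For all x ≥ 0 and y > 0, f(x,y) ≥ x² / (2(1 + xy/3)), where f(x,y) = (xy(ln(xy+1) - 1) + ln(xy+1))/y². -/

import Mathlib

open Real

/-- The optimized Legendre-type exponent in the Dzhaparidze-van Zanten bound. -/
noncomputable def f (x y : ℝ) : ℝ :=
  if y = 0 then x ^ 2 / 2
  else (x * y * (Real.log (x * y + 1) - 1) + Real.log (x * y + 1)) / y ^ 2

-- Padé-type lower bound for log
lemma log_lb (u : ℝ) (hu : 0 ≤ u) : 2 * u / (u + 2) ≤ Real.log (u + 1) := by
  set p : ℝ → ℝ := fun t => Real.log (t + 1) - 2 * t / (t + 2) with hp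
  have hderiv : ∀ t : ℝ, 0 ≤ t →
      HasDerivAt p (1 / (t + 1) - (2 * (t + 2) - 2 * t * 1) / (t + 2) ^ 2) t := by
    intro t ht
    have h1 : HasDerivAt (fun s : ℝ => s + 1) 1 t := (hasDerivAt_id t).add_const 1
    have hne : t + 1 ≠ 0 := by positivity
    have hlog := h1.log hne
    have h2 : HasDerivAt (fun s : ℝ => 2 * s) 2 t := by
      simpa using (hasDerivAt_id t).const_mul 2
    have h3 : HasDerivAt (fun s : ℝ => s + 2) 1 t := (hasDerivAt_id t).add_const 2
    have hne2 : t + 2 ≠ 0 := by positivity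
    have hdiv := h2.div h3 hne2
    exact hlog.sub hdiv
  have hmono : MonotoneOn p (Set.Ici (0 : ℝ)) := by
    apply monotoneOn_of_deriv_nonneg (convex_Ici 0)
    · intro t ht
      exact ((hderiv t ht).differentiableAt).continuousAt.continuousWithinAt
    · intro t ht
      rw [interior_Ici] at ht
      exact ((hderiv t ht.le).differentiableAt).differentiableWithinAt
    · intro t ht
      rw [interior_Ici] at ht
      have ht' : 0 < t := ht
      rw [(hderiv t ht.le).deriv]
      rw [sub_nonneg, div_le_div_iff₀ (by nlinarith) (by nlinarith)]
      nlinarith [sq_nonneg t, ht'.le]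
  have h0 : p 0 = 0 := by simp [hp]
  have := hmono (Set.mem_Ici.mpr le_rfl) (Set.mem_Ici.mpr hu) hu
  rw [h0] at this
  simpa [hp, sub_nonneg] using this

lemma main_ineq (u : ℝ) (hu : 0 ≤ u) :
    3 * u ^ 2 / (2 * (u + 3)) ≤ (u + 1) * Real.log (u + 1) - u := by
  set g : ℝ → ℝ := fun t => (t + 1) * Real.log (t + 1) - t - 3 * t ^ 2 / (2 * (t + 3))
    with hg
  have hderiv : ∀ t : ℝ, 0 ≤ t →
      HasDerivAt g (1 * Real.log (t + 1) + (t + 1) * (1 / (t + 1)) - 1 -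
        (3 * (2 * t ^ 1) * (2 * (t + 3)) - 3 * t ^ 2 * 2) / (2 * (t + 3)) ^ 2) t := by
    intro t ht
    have h1 : HasDerivAt (fun s : ℝ => s + 1) 1 t := (hasDerivAt_id t).add_const 1
    have hne : t + 1 ≠ 0 := by positivity
    have hlog := h1.log hne
    have hprod := h1.mul hlog
    have hnum : HasDerivAt (fun s : ℝ => 3 * s ^ 2) (3 * (2 * t ^ 1)) t :=
      (hasDerivAt_pow 2 t).const_mul 3
    have hden : HasDerivAt (fun s : ℝ => 2 * (s + 3)) 2 t := by
      have : HasDerivAt (fun s : ℝ => s + 3) 1 t := (hasDerivAt_id t).add_const 3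
      simpa using this.const_mul 2
    have hne2 : 2 * (t + 3) ≠ 0 := by positivity
    have hdiv := hnum.div hden hne2
    have := (hprod.sub (hasDerivAt_id t)).sub hdiv
    exact this
  have hmono : MonotoneOn g (Set.Ici (0 : ℝ)) := by
    apply monotoneOn_of_deriv_nonneg (convex_Ici 0)
    · intro t ht
      exact ((hderiv t ht).differentiableAt).continuousAt.continuousWithinAt
    · intro t ht
      rw [interior_Ici] at ht
      exact ((hderiv t ht.le).differentiableAt).differentiableWithinAt
    · intro t ht
      rw [interior_Ici] at ht
      have ht' : 0 < t := ht
      rw [(hderiv t ht.le).deriv]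
      have hne : t + 1 ≠ 0 := by positivity
      have hlb := log_lb t ht.le
      have hR : (3 * (2 * t ^ 1) * (2 * (t + 3)) - 3 * t ^ 2 * 2) / (2 * (t + 3)) ^ 2
          ≤ 2 * t / (t + 2) := by
        rw [div_le_div_iff₀ (by nlinarith) (by nlinarith)]
        nlinarith [pow_pos ht' 3, ht'.le]
      have : (t + 1) * (1 / (t + 1)) = 1 := by field_simp
      rw [this]
      linarith
  have h0 : g 0 = 0 := by norm_num [hg]
  have := hmono (Set.mem_Ici.mpr le_rfl) (Set.mem_Ici.mpr hu) hu
  rw [h0] at this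
  have : 0 ≤ (u + 1) * Real.log (u + 1) - u - 3 * u ^ 2 / (2 * (u + 3)) := this
  linarith

theorem stmt_2 (x y : ℝ) (hx : 0 ≤ x) (hy : 0 < y) :
    x ^ 2 / (2 * (1 + x * y / 3)) ≤ f x y := by
  have hu : 0 ≤ x * y := mul_nonneg hx hy.le
  have key := main_ineq (x * y) hu
  rw [f, if_neg hy.ne']
  have hfe : x * y * (Real.log (x * y + 1) - 1) + Real.log (x * y + 1)
      = (x * y + 1) * Real.log (x * y + 1) - x * y := by ring
  rw [hfe]
  have heq : x ^ 2 / (2 * (1 + x * y / 3)) = (3 * (x * y) ^ 2 / (2 * (x * y + 3))) / y ^ 2 := by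
    have h1 : (1 : ℝ) + x * y / 3 ≠ 0 := by positivity
    have h2 : x * y + 3 ≠ 0 := by positivity
    field_simp
    ring
  rw [heq]
  gcongr
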